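/- Composition in Gen is associative: for arrows R₁ : n → m, R₂ : m → k, R₃ : k → l, (R₃ ∗ R₂) ∗ R₁ = R₃ ∗ (R₂ ∗ R₁). -/

import Mathlib

/-- `R` is an equivalence relation on the finite ordinal `N` (as a subset of ℕ). -/
def IsEquivOn (R : ℕ → ℕ → Prop) (N : ℕ) : Prop :=
  (∀ x y, R x y → x < N ∧ y < N) ∧ (∀ x, x < N → R x x) ∧
    (∀ x y, R x y → R y x) ∧ (∀ x y z, R x y → R y z → R x z)

/-- The relation `R⁺ᵏ`: shift `R` upwards by `k`. -/
def shiftRel (R : ℕ → ℕ → Prop) (k : ℕ) : ℕ → ℕ → Prop :=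
  fun x y => k ≤ x ∧ k ≤ y ∧ R (x - k) (y - k)

/-- Transitive closure of `R₁ ∪ R₂⁺ⁿ`. -/
def glueRel (n : ℕ) (R₁ R₂ : ℕ → ℕ → Prop) : ℕ → ℕ → Prop :=
  Relation.TransGen (fun a b => R₁ a b ∨ shiftRel R₂ n a b)

/-- Renumbering of the outer blocks `n ∪ kⁿ⁺ᵐ` into `n + k`. -/
def embOuter (n m : ℕ) (x : ℕ) : ℕ := if x < n then x else x + m

/-- Composition `R₂ ∗ R₁` in the category Gen: restrict the transitive closure
of `R₁ ∪ R₂⁺ⁿ` to the outer blocks and renumber. -/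
def genComp (n m k : ℕ) (R₂ R₁ : ℕ → ℕ → Prop) : ℕ → ℕ → Prop :=
  fun x y => x < n + k ∧ y < n + k ∧
    glueRel n R₁ R₂ (embOuter n m x) (embOuter n m y)

/-- The identity arrow `1ₙ` of Gen: `x` and `y` are related iff `x ≡ y (mod n)`. -/
def genId (n : ℕ) : ℕ → ℕ → Prop :=
  fun x y => x < n + n ∧ y < n + n ∧ x % n = y % n

theorem tg_lift {α β : Type*} {r : α → α → Prop} {p : β → β → Prop} {a b : α} (f : α → β)
    (h : ∀ a b, r a b → p (f a) (f b)) (hab : Relation.TransGen r a b) :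
    Relation.TransGen p (f a) (f b) :=
  Relation.TransGen.lift f h _ _ hab

theorem tg_lift' {α β : Type*} {r : α → α → Prop} {p : β → β → Prop} {a b : α} (f : α → β)
    (h : ∀ a b, r a b → Relation.TransGen p (f a) (f b)) (hab : Relation.TransGen r a b) :
    Relation.TransGen p (f a) (f b) :=
  Relation.TransGen.lift' f h _ _ hab

theorem tg_mono {α : Type*} {r p : α → α → Prop} {a b : α}
    (h : ∀ a b, r a b → p a b) (hab : Relation.TransGen r a b) : Relation.TransGen p a b :=
  Relation.TransGen.mono h _ _ hab

lemma transGen_bound {r : ℕ → ℕ → Prop} {p : ℕ → Prop}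
    (h : ∀ a b, r a b → p a ∧ p b) {a b : ℕ}
    (ht : Relation.TransGen r a b) : p a ∧ p b := by
  induction ht with
  | single h' => exact h _ _ h'
  | tail _ h' ih => exact ⟨ih.1, (h _ _ h').2⟩

def Drel (P Q : ℕ → ℕ → Prop) (Bad : ℕ → Prop) : ℕ → ℕ → Prop :=
  fun a b => (¬ Bad a ∧ ¬ Bad b ∧ Relation.TransGen P a b) ∨ Q a b

lemma decomp_aux {P Q : ℕ → ℕ → Prop} {Bad : ℕ → Prop}
    (hQ : ∀ a b, Q a b → ¬ Bad a ∧ ¬ Bad b) {x y : ℕ}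
    (h : Relation.TransGen (fun a b => P a b ∨ Q a b) x y) (hx : ¬ Bad x) :
    (¬ Bad y → Relation.TransGen (Drel P Q Bad) x y) ∧
      (Bad y → ∃ w, ¬ Bad w ∧ Relation.ReflTransGen (Drel P Q Bad) x w ∧
        Relation.TransGen P w y) := by
  induction h with
  | single h' =>
    rcases h' with hP | hQ'
    · constructor
      · intro hy
        exact Relation.TransGen.single (Or.inl ⟨hx, hy, Relation.TransGen.single hP⟩)
      · intro hy
        exact ⟨x, hx, Relation.ReflTransGen.refl, Relation.TransGen.single hP⟩
    · constructor
      · intro _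
        exact Relation.TransGen.single (Or.inr hQ')
      · intro hy
        exact absurd hy (hQ _ _ hQ').2
  | tail hxb step ih =>
    rename_i b c
    rcases step with hP | hQ'
    · by_cases hb : Bad b
      · obtain ⟨w, hw, hrt, htp⟩ := ih.2 hb
        constructor
        · intro hy
          exact Relation.TransGen.tail' hrt (Or.inl ⟨hw, hy, htp.tail hP⟩)
        · intro hy
          exact ⟨w, hw, hrt, htp.tail hP⟩
      · have hd := ih.1 hb
        constructor
        · intro hy
          exact hd.tail (Or.inl ⟨hb, hy, Relation.TransGen.single hP⟩)
        · intro hy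
          exact ⟨b, hb, hd.to_reflTransGen, Relation.TransGen.single hP⟩
    · have hb := (hQ _ _ hQ').1
      have hc := (hQ _ _ hQ').2
      have hd := ih.1 hb
      constructor
      · intro _
        exact hd.tail (Or.inr hQ')
      · intro hy
        exact absurd hy hc

lemma decomp {P Q : ℕ → ℕ → Prop} {Bad : ℕ → Prop}
    (hQ : ∀ a b, Q a b → ¬ Bad a ∧ ¬ Bad b) {x y : ℕ}
    (h : Relation.TransGen (fun a b => P a b ∨ Q a b) x y)
    (hx : ¬ Bad x) (hy : ¬ Bad y) :
    Relation.TransGen (Drel P Q Bad) x y :=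
  (decomp_aux hQ h hx).1 hy

lemma lhs_iff (n m k l : ℕ) (R₁ R₂ R₃ : ℕ → ℕ → Prop)
    (hb1 : ∀ a b, R₁ a b → a < n + m ∧ b < n + m)
    (hb2 : ∀ a b, R₂ a b → a < m + k ∧ b < m + k)
    (hb3 : ∀ a b, R₃ a b → a < k + l ∧ b < k + l)
    (x y : ℕ) :
    genComp n k l R₃ (genComp n m k R₂ R₁) x y ↔
      x < n + l ∧ y < n + l ∧
        Relation.TransGen
          (fun a b => R₁ a b ∨ shiftRel R₂ n a b ∨ shiftRel R₃ (n + m) a b)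
          (if x < n then x else x + (m + k)) (if y < n then y else y + (m + k)) := by
  have hEx : embOuter n m (embOuter n k x) = (if x < n then x else x + (m + k)) := by
    simp only [embOuter]; split_ifs <;> omega
  have hEy : embOuter n m (embOuter n k y) = (if y < n then y else y + (m + k)) := by
    simp only [embOuter]; split_ifs <;> omega
  constructor
  · rintro ⟨hx, hy, hg⟩
    refine ⟨hx, hy, ?_⟩
    rw [← hEx, ← hEy]
    refine tg_lift' (embOuter n m) ?_ hg
    rintro a b (⟨ha, hb, hg'⟩ | ⟨ha, hb, hr⟩)
    · exact tg_mono (fun a b h => h.elim Or.inl (fun h => Or.inr (Or.inl h))) hg'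
    · refine Relation.TransGen.single (Or.inr (Or.inr ?_))
      simp only [embOuter]
      split_ifs with h1 h2 h2 <;> try omega
      refine ⟨by omega, by omega, ?_⟩
      have e1 : a + m - (n + m) = a - n := by omega
      have e2 : b + m - (n + m) = b - n := by omega
      rw [e1, e2]; exact hr
  · rintro ⟨hx, hy, hg⟩
    refine ⟨hx, hy, ?_⟩
    rw [← hEx, ← hEy] at hg
    -- decompose
    have hg' : Relation.TransGen
        (fun a b => (R₁ a b ∨ shiftRel R₂ n a b) ∨ shiftRel R₃ (n + m) a b)
        (embOuter n m (embOuter n k x)) (embOuter n m (embOuter n k y)) :=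
      tg_mono (fun a b h => by tauto) hg
    have hQav : ∀ a b, shiftRel R₃ (n + m) a b →
        ¬ (n ≤ a ∧ a < n + m) ∧ ¬ (n ≤ b ∧ b < n + m) := by
      rintro a b ⟨ha, hb, -⟩; omega
    have hxB : ¬ (n ≤ embOuter n m (embOuter n k x) ∧
        embOuter n m (embOuter n k x) < n + m) := by
      simp only [embOuter]; split_ifs <;> omega
    have hyB : ¬ (n ≤ embOuter n m (embOuter n k y) ∧
        embOuter n m (embOuter n k y) < n + m) := by
      simp only [embOuter]; split_ifs <;> omega
    have hd := decomp hQav hg' hxB hyB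
    -- map back via the retraction
    have key := tg_lift' (f := fun a => if a < n then a else a - m)
      (r := Drel (fun a b => R₁ a b ∨ shiftRel R₂ n a b) (shiftRel R₃ (n + m))
        (fun a => n ≤ a ∧ a < n + m))
      (p := fun a b => genComp n m k R₂ R₁ a b ∨ shiftRel R₃ n a b)
      ?_ hd
    · have e1 : (if embOuter n m (embOuter n k x) < n then embOuter n m (embOuter n k x)
          else embOuter n m (embOuter n k x) - m) = embOuter n k x := by
        simp only [embOuter]; split_ifs <;> omega
      have e2 : (if embOuter n m (embOuter n k y) < n then embOuter n m (embOuter n k y)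
          else embOuter n m (embOuter n k y) - m) = embOuter n k y := by
        simp only [embOuter]; split_ifs <;> omega
      simpa only [e1, e2, glueRel] using key
    · rintro a b (⟨hba, hbb, hP⟩ | ⟨ha, hb, hr⟩)
      · -- a run of P-steps outside the middle block: gives a genComp step
        have hbound : a < n + m + k ∧ b < n + m + k := by
          refine transGen_bound (p := fun a => a < n + m + k) ?_ hP
          rintro a b (h | ⟨ha, hb, hr⟩)
          · have := hb1 _ _ h; omega
          · have := hb2 _ _ hr; omega
        simp only [not_and, not_lt] at hba hbb
        refine Relation.TransGen.single (Or.inl ⟨?_, ?_, ?_⟩)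
        · beta_reduce; split_ifs <;> omega
        · beta_reduce; split_ifs <;> omega
        · have e1 : embOuter n m (if a < n then a else a - m) = a := by
            simp only [embOuter]; split_ifs <;> omega
          have e2 : embOuter n m (if b < n then b else b - m) = b := by
            simp only [embOuter]; split_ifs <;> omega
          show glueRel n R₁ R₂ _ _
          rw [e1, e2]
          exact hP
      · refine Relation.TransGen.single (Or.inr ⟨?_, ?_, ?_⟩)
        · beta_reduce; split_ifs <;> omega
        · beta_reduce; split_ifs <;> omega
        · have e1 : (if a < n then a else a - m) - n = a - (n + m) := by
            split_ifs <;> omega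
          have e2 : (if b < n then b else b - m) - n = b - (n + m) := by
            split_ifs <;> omega
          rw [e1, e2]
          exact hr

lemma rhs_iff (n m k l : ℕ) (R₁ R₂ R₃ : ℕ → ℕ → Prop)
    (hb1 : ∀ a b, R₁ a b → a < n + m ∧ b < n + m)
    (hb2 : ∀ a b, R₂ a b → a < m + k ∧ b < m + k)
    (hb3 : ∀ a b, R₃ a b → a < k + l ∧ b < k + l)
    (x y : ℕ) :
    genComp n m l (genComp m k l R₃ R₂) R₁ x y ↔
      x < n + l ∧ y < n + l ∧
        Relation.TransGen
          (fun a b => R₁ a b ∨ shiftRel R₂ n a b ∨ shiftRel R₃ (n + m) a b)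
          (if x < n then x else x + (m + k)) (if y < n then y else y + (m + k)) := by
  have hEx : (if embOuter n m x < n + m then embOuter n m x else embOuter n m x + k)
      = (if x < n then x else x + (m + k)) := by
    simp only [embOuter]; split_ifs <;> omega
  have hEy : (if embOuter n m y < n + m then embOuter n m y else embOuter n m y + k)
      = (if y < n then y else y + (m + k)) := by
    simp only [embOuter]; split_ifs <;> omega
  constructor
  · rintro ⟨hx, hy, hg⟩
    refine ⟨hx, hy, ?_⟩
    rw [← hEx, ← hEy]
    refine tg_lift' (fun a => if a < n + m then a else a + k) ?_ hg
    rintro a b (hR | ⟨ha, hb, h1, h2, hT⟩)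
    · have hab := hb1 _ _ hR
      beta_reduce
      rw [if_pos (by omega), if_pos (by omega)]
      exact Relation.TransGen.single (Or.inl hR)
    · -- a shifted step of the inner composition
      have hmap : Relation.TransGen
          (fun a b => R₁ a b ∨ shiftRel R₂ n a b ∨ shiftRel R₃ (n + m) a b)
          (n + embOuter m k (a - n)) (n + embOuter m k (b - n)) := by
        refine tg_lift (fun u => n + u) ?_ hT
        rintro u v (hR | ⟨hu, hv, hr⟩)
        · beta_reduce
          refine Or.inr (Or.inl ⟨by omega, by omega, ?_⟩)
          have e1 : n + u - n = u := by omega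
          have e2 : n + v - n = v := by omega
          rw [e1, e2]; exact hR
        · beta_reduce
          refine Or.inr (Or.inr ⟨by omega, by omega, ?_⟩)
          have e1 : n + u - (n + m) = u - m := by omega
          have e2 : n + v - (n + m) = v - m := by omega
          rw [e1, e2]; exact hr
      have ea : (if a < n + m then a else a + k) = n + embOuter m k (a - n) := by
        simp only [embOuter]; split_ifs <;> omega
      have eb : (if b < n + m then b else b + k) = n + embOuter m k (b - n) := by
        simp only [embOuter]; split_ifs <;> omega
      beta_reduce
      rw [ea, eb]
      exact hmap
  · rintro ⟨hx, hy, hg⟩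
    refine ⟨hx, hy, ?_⟩
    rw [← hEx, ← hEy] at hg
    have hg' : Relation.TransGen
        (fun a b => (shiftRel R₂ n a b ∨ shiftRel R₃ (n + m) a b) ∨ R₁ a b)
        (if embOuter n m x < n + m then embOuter n m x else embOuter n m x + k)
        (if embOuter n m y < n + m then embOuter n m y else embOuter n m y + k) :=
      tg_mono (fun a b h => by tauto) hg
    have hQav : ∀ a b, R₁ a b →
        ¬ (n + m ≤ a ∧ a < n + m + k) ∧ ¬ (n + m ≤ b ∧ b < n + m + k) := by
      intro a b h
      have := hb1 _ _ h; omega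
    have hxB : ¬ (n + m ≤ (if embOuter n m x < n + m then embOuter n m x
        else embOuter n m x + k) ∧ (if embOuter n m x < n + m then embOuter n m x
        else embOuter n m x + k) < n + m + k) := by
      simp only [embOuter]; split_ifs <;> omega
    have hyB : ¬ (n + m ≤ (if embOuter n m y < n + m then embOuter n m y
        else embOuter n m y + k) ∧ (if embOuter n m y < n + m then embOuter n m y
        else embOuter n m y + k) < n + m + k) := by
      simp only [embOuter]; split_ifs <;> omega
    have hd := decomp hQav hg' hxB hyB
    have key := tg_lift' (f := fun a => if a < n + m then a else a - k)
      (p := fun a b => R₁ a b ∨ shiftRel (genComp m k l R₃ R₂) n a b) ?_ hd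
    · have e1 : (if (if embOuter n m x < n + m then embOuter n m x else embOuter n m x + k)
          < n + m then (if embOuter n m x < n + m then embOuter n m x else embOuter n m x + k)
          else (if embOuter n m x < n + m then embOuter n m x else embOuter n m x + k) - k)
          = embOuter n m x := by
        simp only [embOuter]; split_ifs <;> omega
      have e2 : (if (if embOuter n m y < n + m then embOuter n m y else embOuter n m y + k)
          < n + m then (if embOuter n m y < n + m then embOuter n m y else embOuter n m y + k)
          else (if embOuter n m y < n + m then embOuter n m y else embOuter n m y + k) - k)
          = embOuter n m y := by
        simp only [embOuter]; split_ifs <;> omega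
      simpa only [e1, e2, glueRel] using key
    · rintro a b (⟨hba, hbb, hP⟩ | hR)
      · have hbound : (n ≤ a ∧ a < n + m + k + l) ∧ (n ≤ b ∧ b < n + m + k + l) := by
          refine transGen_bound (p := fun a => n ≤ a ∧ a < n + m + k + l) ?_ hP
          rintro a b (⟨ha, hb, hr⟩ | ⟨ha, hb, hr⟩)
          · have := hb2 _ _ hr; omega
          · have := hb3 _ _ hr; omega
        simp only [not_and, not_lt] at hba hbb
        have hmap : Relation.TransGen
            (fun u v => R₂ u v ∨ shiftRel R₃ m u v) (a - n) (b - n) := by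
          refine tg_lift (fun u => u - n) ?_ hP
          rintro u v (⟨hu, hv, hr⟩ | ⟨hu, hv, hr⟩)
          · exact Or.inl hr
          · beta_reduce
            refine Or.inr ⟨by omega, by omega, ?_⟩
            have e1 : u - n - m = u - (n + m) := by omega
            have e2 : v - n - m = v - (n + m) := by omega
            rw [e1, e2]; exact hr
        refine Relation.TransGen.single (Or.inr ⟨?_, ?_, ?_, ?_, ?_⟩)
        · beta_reduce; split_ifs <;> omega
        · beta_reduce; split_ifs <;> omega
        · beta_reduce; split_ifs <;> omega
        · beta_reduce; split_ifs <;> omega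
        · show glueRel m R₂ R₃ _ _
          have ea : embOuter m k ((if a < n + m then a else a - k) - n) = a - n := by
            simp only [embOuter]; split_ifs <;> omega
          have eb : embOuter m k ((if b < n + m then b else b - k) - n) = b - n := by
            simp only [embOuter]; split_ifs <;> omega
          beta_reduce
          rw [ea, eb]
          exact hmap
      · have hab := hb1 _ _ hR
        beta_reduce
        rw [if_pos (by omega), if_pos (by omega)]
        exact Relation.TransGen.single (Or.inl hR)

/-- Composition in Gen is associative. -/
theorem genComp_assoc (n m k l : ℕ) (R₁ R₂ R₃ : ℕ → ℕ → Prop)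
    (h₁ : IsEquivOn R₁ (n + m)) (h₂ : IsEquivOn R₂ (m + k))
    (h₃ : IsEquivOn R₃ (k + l)) :
    genComp n k l R₃ (genComp n m k R₂ R₁) =
      genComp n m l (genComp m k l R₃ R₂) R₁ := by
  obtain ⟨hb1, -, -, -⟩ := h₁
  obtain ⟨hb2, -, -, -⟩ := h₂
  obtain ⟨hb3, -, -, -⟩ := h₃
  funext x y
  exact propext ((lhs_iff n m k l R₁ R₂ R₃ hb1 hb2 hb3 x y).trans
    (rhs_iff n m k l R₁ R₂ R₃ hb1 hb2 hb3 x y).symm)
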